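/- Closed form and concavity of seller 2's profit under binding IC1 (uniform case): let A ∈ (0,1), p2 ∈ (0,1] and p1 > 0 with B(p1,p2) ≠ 0, and set α̲ = (M1(p2) − p1·D1²(p1,p2)) / (p1·B(p1,p2)). Then p2·D2²(p1,p2) + (1−α̲)·p2·B(p1,p2) = p2·(1 − p1·p2 − M1(p2)/p1). Moreover, if M1(p2) > 0, the function p1 ↦ p2·(1 − p1·p2 − M1(p2)/p1) is strictly concave on (0,∞). -/

import Mathlib

/-- Demand of seller 1 when ranked second (uniform match utilities). -/
noncomputable def D12 (A p1 p2 : ℝ) : ℝ := -A^2/2 + p1^2/2 - p1*p2 + A - p1 + p2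

/-- Demand of seller 2 when ranked second (uniform match utilities). -/
noncomputable def D22 (A p1 p2 : ℝ) : ℝ := -A^2/2 + p2^2/2 - p1*p2 + A + p1 - p2

/-- The bonus from being ranked first instead of second (uniform case). -/
noncomputable def bonus (A p1 p2 : ℝ) : ℝ := (1-A)^2 - (1/2)*(p1-p2)^2

/-- Seller 1's optimal deviation value when ranked second. -/
noncomputable def M1 (A p2 : ℝ) : ℝ :=
  sSup ((fun p' => p' * D12 A p' p2) '' Set.Icc (0:ℝ) 1)

/-- Seller 2's optimal deviation value when ranked second. -/
noncomputable def M2 (A p1 : ℝ) : ℝ :=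
  sSup ((fun p' => p' * D22 A p1 p') '' Set.Icc (0:ℝ) 1)

/-- The function whose nonpositivity characterizes implementable prices. -/
noncomputable def H (A p1 p2 : ℝ) : ℝ := M1 A p2 / p1 + M2 A p1 / p2 + p1*p2 - 1

/-- The set of implementable prices. -/
def implementableP (A : ℝ) : Set (ℝ × ℝ) :=
  {q | 0 < q.1 ∧ q.1 ≤ 1 ∧ 0 < q.2 ∧ q.2 ≤ 1 ∧ H A q.1 q.2 ≤ 0}

/-- The set of implementable search orders at prices `(p1, p2)`. -/
def phi (A p1 p2 : ℝ) : Set ℝ :=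
  {α | α ∈ Set.Icc (0:ℝ) 1
    ∧ M1 A p2 ≤ p1 * D12 A p1 p2 + α * p1 * bonus A p1 p2
    ∧ M2 A p1 ≤ p2 * D22 A p1 p2 + (1-α) * p2 * bonus A p1 p2}

lemma strictConvexOn_smul' {s : Set ℝ} {f : ℝ → ℝ} {c : ℝ} (hc : 0 < c)
    (hf : StrictConvexOn ℝ s f) : StrictConvexOn ℝ s (fun x => c * f x) := by
  refine ⟨hf.1, fun x hx y hy hxy a b ha hb hab => ?_⟩
  have := hf.2 hx hy hxy ha hb hab
  simp only [smul_eq_mul] at *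
  nlinarith

lemma concaveOn_affine (a b : ℝ) (s : Set ℝ) (hs : Convex ℝ s) :
    ConcaveOn ℝ s (fun x => a - b * x) := by
  refine ⟨hs, fun x _ y _ u v hu hv huv => le_of_eq ?_⟩
  simp only [smul_eq_mul]
  have h : u = 1 - v := by linarith
  subst h; ring

/-- Closed form and concavity of seller 2's profit under binding IC1 (uniform
case): with `α̲ = (M1(p2) - p1·D1²)/(p1·B)`,
`p2·D2² + (1-α̲)·p2·B = p2·(1 - p1·p2 - M1(p2)/p1)`, and if `M1(p2) > 0`
this expression is strictly concave in `p1` on `(0,∞)`. -/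
theorem binding_IC1_profit
    (A p1 p2 : ℝ) (hA : A ∈ Set.Ioo (0:ℝ) 1)
    (hp2 : p2 ∈ Set.Ioc (0:ℝ) 1) (hp1 : 0 < p1)
    (hB : bonus A p1 p2 ≠ 0) :
    p2 * D22 A p1 p2
        + (1 - (M1 A p2 - p1 * D12 A p1 p2) / (p1 * bonus A p1 p2))
            * p2 * bonus A p1 p2
      = p2 * (1 - p1*p2 - M1 A p2 / p1)
    ∧ (0 < M1 A p2 →
        StrictConcaveOn ℝ (Set.Ioi (0:ℝ))
          (fun x : ℝ => p2 * (1 - x*p2 - M1 A p2 / x))) := by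
  obtain ⟨hp2pos, _⟩ := hp2
  constructor
  · have h1 : D12 A p1 p2 + D22 A p1 p2 + bonus A p1 p2 = 1 - p1 * p2 := by
      simp only [D12, D22, bonus]; ring
    field_simp
    linear_combination p1 * h1
  · intro hM
    set c := M1 A p2 with hc
    have key : (fun x : ℝ => p2 * (1 - x*p2 - c / x))
        = (fun x : ℝ => -((p2 * c) * x ^ (-1 : ℤ)))
          + (fun x : ℝ => p2 - (p2 * p2) * x) := by
      funext x
      simp only [Pi.add_apply, Pi.neg_apply, zpow_neg, zpow_one]
      by_cases hx : x = 0
      · simp [hx]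
      · field_simp
        ring
    rw [key]
    exact ((strictConvexOn_smul' (mul_pos hp2pos hM)
      (strictConvexOn_zpow (by norm_num) (by norm_num))).neg).add_concaveOn
      (concaveOn_affine _ _ _ (convex_Ioi 0))
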